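/- The total variation distance interestingness measure has sensitivity at least 1/2. Precisely: for every δ > 0 there exist a finite value domain V, a dataset D with a nonempty sub-multiset (cluster) D_c ⊆ D, an attribute A, and a tuple t, such that, writing D' = D + {t} and D_c' = D_c + {t}, one has |TVD(π_A(D'), π_A(D_c')) − TVD(π_A(D), π_A(D_c))| ≥ 1/2 − δ. (Moreover TVD always takes values in [0,1].) -/

import Mathlib

noncomputable section

/-- `cntR A D a` is the number of tuples of the dataset (multiset) `D` whose
`A`-attribute value equals `a`, as a real number. -/
def cntR {T V : Type*} [DecidableEq V] (A : T → V) (D : Multiset T) (a : V) : ℝ :=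
  ((D.map A).count a : ℝ)

/-- Total variation distance between the `A`-column value distributions of the
dataset `D` and the cluster `Dc`. -/
def TVD {T V : Type*} [Fintype V] [DecidableEq V] (A : T → V) (D Dc : Multiset T) : ℝ :=
  (1 / 2) * ∑ a : V,
    |cntR A D a / (Multiset.card D : ℝ) - cntR A Dc a / (Multiset.card Dc : ℝ)|

lemma sum_cntR {T V : Type*} [Fintype V] [DecidableEq V] (A : T → V) (m : Multiset T) :
    ∑ a : V, cntR A m a = (Multiset.card m : ℝ) := by
  have h : ∑ a : V, ((m.map A).count a) = Multiset.card (m.map A) := by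
    rw [← Multiset.toFinset_sum_count_eq (m.map A)]
    exact (Finset.sum_subset (Finset.subset_univ _)
      (fun a _ ha => Multiset.count_eq_zero.2 (by simpa using ha))).symm
  simp only [cntR]
  rw [← Nat.cast_sum, h, Multiset.card_map]

/-- The TVD interestingness measure has sensitivity at least `1/2`, and its range
is contained in `[0,1]`. -/
theorem tvd_high_sensitivity :
    (∀ δ : ℝ, 0 < δ →
      ∃ (T V : Type) (fV : Fintype V) (dV : DecidableEq V)
        (A : T → V) (D Dc : Multiset T) (t : T),
        Dc ≤ D ∧ Dc ≠ 0 ∧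
        1 / 2 - δ ≤
          |@TVD T V fV dV A (t ::ₘ D) (t ::ₘ Dc) - @TVD T V fV dV A D Dc|) ∧
    (∀ (T V : Type) (fV : Fintype V) (dV : DecidableEq V)
        (A : T → V) (D Dc : Multiset T), Dc ≤ D → Dc ≠ 0 →
        0 ≤ @TVD T V fV dV A D Dc ∧ @TVD T V fV dV A D Dc ≤ 1) := by
  constructor
  · intro δ hδ
    obtain ⟨n, hn⟩ := exists_nat_one_div_lt hδ
    refine ⟨Bool, Bool, inferInstance, inferInstance, id,
      Multiset.replicate (n + 1) false, {false}, true, ?_, by simp, ?_⟩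
    · exact Multiset.le_iff_count.2 (by intro a; cases a <;> simp [Multiset.count_replicate])
    · set N : ℝ := (n : ℝ) with hN
      have hN0 : 0 ≤ N := Nat.cast_nonneg n
      have hTVD0 : TVD id (Multiset.replicate (n + 1) false) ({false} : Multiset Bool) = 0 := by
        have hnz : ((n:ℝ) + 1) ≠ 0 := by positivity
        simp [TVD, cntR, Fintype.sum_bool, Multiset.count_replicate]
        field_simp
        ring
      have hc : TVD id (true ::ₘ Multiset.replicate (n + 1) false)
          (true ::ₘ ({false} : Multiset Bool)) =
          (1 / 2) * (|1 / (N + 2) - 1 / 2| + |(N + 1) / (N + 2) - 1 / 2|) := by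
        simp [TVD, cntR, Fintype.sum_bool, Multiset.count_replicate, hN]
        ring_nf
      rw [hTVD0, hc, sub_zero]
      have h1 : |1 / (N + 2) - 1 / 2| ≥ 1 / 2 - 1 / (N + 2) := by
        have := neg_abs_le (1 / (N + 2) - 1 / 2); linarith
      have h2 : |(N + 1) / (N + 2) - 1 / 2| ≥ (N + 1) / (N + 2) - 1 / 2 := le_abs_self _
      have key : (1 / 2) * (|1 / (N + 2) - 1 / 2| + |(N + 1) / (N + 2) - 1 / 2|) ≥
          (1 / 2) * (N / (N + 2)) := by
        have : (1 / 2 - 1 / (N + 2)) + ((N + 1) / (N + 2) - 1 / 2) = N / (N + 2) := by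
          have hpos : (0:ℝ) < N + 2 := by linarith
          field_simp
          ring
        nlinarith
      have hδ' : 1 / (N + 1) < δ := by
        have : (1 : ℝ) / (n + 1) < δ := hn
        simpa [hN] using this
      have hfinal : 1 / 2 - δ ≤ (1 / 2) * (N / (N + 2)) := by
        have hpos2 : (0:ℝ) < N + 2 := by linarith
        have hpos1 : (0:ℝ) < N + 1 := by linarith
        have : 1 / 2 - (1 / 2) * (N / (N + 2)) = 1 / (N + 2) := by field_simp; ring
        have hle : 1 / (N + 2) ≤ 1 / (N + 1) := by
          apply one_div_le_one_div_of_le hpos1; linarith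
        linarith
      calc 1 / 2 - δ ≤ (1 / 2) * (N / (N + 2)) := hfinal
        _ ≤ (1 / 2) * (|1 / (N + 2) - 1 / 2| + |(N + 1) / (N + 2) - 1 / 2|) := key
        _ ≤ |(1 / 2) * (|1 / (N + 2) - 1 / 2| + |(N + 1) / (N + 2) - 1 / 2|)| := le_abs_self _
  · intro T V fV dV A D Dc hle hne
    have hDc : (Multiset.card Dc : ℝ) ≠ 0 := by
      simpa [Multiset.card_eq_zero] using hne
    have hD : (Multiset.card D : ℝ) ≠ 0 := by
      intro h
      apply hne
      have : D = 0 := by simpa [Multiset.card_eq_zero] using h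
      exact le_antisymm (this ▸ hle) (Multiset.zero_le _)
    constructor
    · apply mul_nonneg (by norm_num)
      exact Finset.sum_nonneg fun a _ => abs_nonneg _
    · rw [TVD]
      have hbound : ∑ a : V,
          |cntR A D a / (Multiset.card D : ℝ) - cntR A Dc a / (Multiset.card Dc : ℝ)| ≤
          ∑ a : V, (cntR A D a / (Multiset.card D : ℝ) +
            cntR A Dc a / (Multiset.card Dc : ℝ)) := by
        apply Finset.sum_le_sum
        intro a _
        have h1 : 0 ≤ cntR A D a / (Multiset.card D : ℝ) :=
          div_nonneg (Nat.cast_nonneg _) (Nat.cast_nonneg _)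
        have h2 : 0 ≤ cntR A Dc a / (Multiset.card Dc : ℝ) :=
          div_nonneg (Nat.cast_nonneg _) (Nat.cast_nonneg _)
        rw [abs_sub_le_iff]
        constructor <;> linarith
      have hsum : ∑ a : V, (cntR A D a / (Multiset.card D : ℝ) +
          cntR A Dc a / (Multiset.card Dc : ℝ)) = 2 := by
        rw [Finset.sum_add_distrib, ← Finset.sum_div, ← Finset.sum_div,
          sum_cntR, sum_cntR, div_self hD, div_self hDc]
        norm_num
      rw [hsum] at hbound
      linarith
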